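/- For f_∞[z:w] = [w² + a z² : b w² + z²] on ℙ¹ with parameters a, b, the exceptional sets are X = {[1:b], [a:1]} and Y = f_∞²({[i:1],[i:−1],[1:−1]}) = {[(1+b)² + a(1+a)² : b(b+1)² + (1+a)²], [(b−1)² + a(1−a)² : b(b−1)² + (1−a)²]} (for R(z,w) = z² + 2zw + w²); for all (a,b) outside a proper algebraic subset of ℂ², the sets X and Y are disjoint and f_∞^{-1}(X ∪ Y) ∩ (X ∪ Y) = ∅. -/
import Mathlib

/-- Equality of points of `ℙ¹` given in homogeneous coordinates: `[p₁:p₂] = [q₁:q₂]` iff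
`p₁ q₂ = p₂ q₁`. -/
def projEq (p q : ℂ × ℂ) : Prop := p.1 * q.2 = p.2 * q.1

/-- The map `f_∞[z:w] = [w² + a z² : b w² + z²]` in homogeneous coordinates. -/
def F17 (a b : ℂ) (p : ℂ × ℂ) : ℂ × ℂ :=
  (p.2 ^ 2 + a * p.1 ^ 2, b * p.2 ^ 2 + p.1 ^ 2)

noncomputable def pA : MvPolynomial (Fin 2) ℂ := MvPolynomial.X 0
noncomputable def pB : MvPolynomial (Fin 2) ℂ := MvPolynomial.X 1
noncomputable def pY1 : MvPolynomial (Fin 2) ℂ := (1+pB)^2 + pA*(1+pA)^2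
noncomputable def pY2 : MvPolynomial (Fin 2) ℂ := pB*(pB+1)^2 + (1+pA)^2
noncomputable def pY3 : MvPolynomial (Fin 2) ℂ := (pB-1)^2 + pA*(1-pA)^2
noncomputable def pY4 : MvPolynomial (Fin 2) ℂ := pB*(pB-1)^2 + (1-pA)^2
noncomputable def pcross (P Q : MvPolynomial (Fin 2) ℂ × MvPolynomial (Fin 2) ℂ) :
    MvPolynomial (Fin 2) ℂ :=
  (P.2^2 + pA*P.1^2)*Q.2 - (pB*P.2^2 + P.1^2)*Q.1
noncomputable def gpoly : MvPolynomial (Fin 2) ℂ :=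
  (pA) *
  (pB) *
  (pY1) *
  (pY2) *
  (pY3) *
  (pY4) *
  ((pY2 - pB*pY1)) *
  ((pY4 - pB*pY3)) *
  ((pA*pY2 - pY1)) *
  ((pA*pY4 - pY3)) *
  (pcross (1, pB) (1, pB)) *
  (pcross (1, pB) (pA, 1)) *
  (pcross (1, pB) (pY1, pY2)) *
  (pcross (1, pB) (pY3, pY4)) *
  (pcross (pA, 1) (1, pB)) *
  (pcross (pA, 1) (pA, 1)) *
  (pcross (pA, 1) (pY1, pY2)) *
  (pcross (pA, 1) (pY3, pY4)) *
  (pcross (pY1, pY2) (1, pB)) *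
  (pcross (pY1, pY2) (pA, 1)) *
  (pcross (pY1, pY2) (pY1, pY2)) *
  (pcross (pY1, pY2) (pY3, pY4)) *
  (pcross (pY3, pY4) (1, pB)) *
  (pcross (pY3, pY4) (pA, 1)) *
  (pcross (pY3, pY4) (pY1, pY2)) *
  (pcross (pY3, pY4) (pY3, pY4))

lemma key (a b z w P1 P2 Q1 Q2 : ℂ) (hP2 : P2 ≠ 0) (hzw : (z, w) ≠ (0, 0))
    (hz : projEq (z, w) (P1, P2))
    (hc : (P2^2 + a*P1^2) * Q2 - (b*P2^2 + P1^2) * Q1 ≠ 0) :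
    ¬ projEq (F17 a b (z, w)) (Q1, Q2) := by
  intro h
  simp only [projEq, F17] at hz h
  have hw : w ≠ 0 := by
    rintro rfl
    have h0 : z * P2 = 0 := by linear_combination hz
    exact hzw (by rw [(mul_eq_zero.mp h0).resolve_right hP2])
  apply hc
  have h2 : w^2 * P2^2 * ((P2^2 + a*P1^2) * Q2 - (b*P2^2 + P1^2) * Q1) = 0 := by
    linear_combination P2^4 * h - (a*Q2 - Q1)*P2^2*(w*P1 + z*P2) * hz
  have hne : w^2 * P2^2 ≠ 0 := mul_ne_zero (pow_ne_zero 2 hw) (pow_ne_zero 2 hP2)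
  exact (mul_eq_zero.mp h2).resolve_left hne

/-- For `f_∞[z:w] = [w² + a z² : b w² + z²]` on `ℙ¹` (and `R(z,w) = z² + 2zw + w²`), the
exceptional sets are `X = {[1:b],[a:1]}` and
`Y = f_∞²({[i:1],[i:−1],[1:−1]}) = {[(1+b)²+a(1+a)² : b(b+1)²+(1+a)²],
[(b−1)²+a(1−a)² : b(b−1)²+(1−a)²]}`; for all `(a,b)` outside a proper algebraic subset of
`ℂ²`, `X` and `Y` are disjoint and `f_∞⁻¹(X ∪ Y) ∩ (X ∪ Y) = ∅`. -/
theorem generic_degree_two_example :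
    ∃ g : MvPolynomial (Fin 2) ℂ, g ≠ 0 ∧
      ∀ a b : ℂ, MvPolynomial.eval ![a, b] g ≠ 0 →
        -- Y = f_∞²(Y₋₂)
        (projEq (F17 a b (F17 a b (1, -1)))
          ((1 + b) ^ 2 + a * (1 + a) ^ 2, b * (b + 1) ^ 2 + (1 + a) ^ 2) ∧
        projEq (F17 a b (F17 a b (Complex.I, 1)))
          ((b - 1) ^ 2 + a * (1 - a) ^ 2, b * (b - 1) ^ 2 + (1 - a) ^ 2) ∧
        projEq (F17 a b (F17 a b (Complex.I, -1)))
          ((b - 1) ^ 2 + a * (1 - a) ^ 2, b * (b - 1) ^ 2 + (1 - a) ^ 2)) ∧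
        -- X ∩ Y = ∅
        (¬ projEq ((1 : ℂ), b)
            ((1 + b) ^ 2 + a * (1 + a) ^ 2, b * (b + 1) ^ 2 + (1 + a) ^ 2) ∧
        ¬ projEq ((1 : ℂ), b)
            ((b - 1) ^ 2 + a * (1 - a) ^ 2, b * (b - 1) ^ 2 + (1 - a) ^ 2) ∧
        ¬ projEq (a, (1 : ℂ))
            ((1 + b) ^ 2 + a * (1 + a) ^ 2, b * (b + 1) ^ 2 + (1 + a) ^ 2) ∧
        ¬ projEq (a, (1 : ℂ))
            ((b - 1) ^ 2 + a * (1 - a) ^ 2, b * (b - 1) ^ 2 + (1 - a) ^ 2)) ∧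
        -- f_∞⁻¹(X ∪ Y) ∩ (X ∪ Y) = ∅
        (∀ z w : ℂ, (z, w) ≠ (0, 0) →
          (projEq (z, w) ((1 : ℂ), b) ∨ projEq (z, w) (a, (1 : ℂ)) ∨
            projEq (z, w) ((1 + b) ^ 2 + a * (1 + a) ^ 2, b * (b + 1) ^ 2 + (1 + a) ^ 2) ∨
            projEq (z, w) ((b - 1) ^ 2 + a * (1 - a) ^ 2, b * (b - 1) ^ 2 + (1 - a) ^ 2)) →
          ¬ (projEq (F17 a b (z, w)) ((1 : ℂ), b) ∨ projEq (F17 a b (z, w)) (a, (1 : ℂ)) ∨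
            projEq (F17 a b (z, w))
              ((1 + b) ^ 2 + a * (1 + a) ^ 2, b * (b + 1) ^ 2 + (1 + a) ^ 2) ∨
            projEq (F17 a b (z, w))
              ((b - 1) ^ 2 + a * (1 - a) ^ 2, b * (b - 1) ^ 2 + (1 - a) ^ 2))) := by
  refine ⟨gpoly, ?_, ?_⟩
  · intro h
    have h0 : MvPolynomial.eval ![(2 : ℂ), 3] gpoly = 0 := by rw [h]; simp
    simp only [gpoly, pcross, pY1, pY2, pY3, pY4, pA, pB, map_mul, map_add, map_sub, map_pow, map_one, MvPolynomial.eval_X,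
      Matrix.cons_val_zero, Matrix.cons_val_one, Matrix.head_cons] at h0
    norm_num at h0
  · intro a b hg
    simp only [gpoly, pcross, pY1, pY2, pY3, pY4, pA, pB, map_mul, map_add, map_sub,
      map_pow, map_one, MvPolynomial.eval_X,
      Matrix.cons_val_zero, Matrix.cons_val_one, Matrix.head_cons] at hg
    obtain ⟨hg, h26⟩ := mul_ne_zero_iff.mp hg
    obtain ⟨hg, h25⟩ := mul_ne_zero_iff.mp hg
    obtain ⟨hg, h24⟩ := mul_ne_zero_iff.mp hg
    obtain ⟨hg, h23⟩ := mul_ne_zero_iff.mp hg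
    obtain ⟨hg, h22⟩ := mul_ne_zero_iff.mp hg
    obtain ⟨hg, h21⟩ := mul_ne_zero_iff.mp hg
    obtain ⟨hg, h20⟩ := mul_ne_zero_iff.mp hg
    obtain ⟨hg, h19⟩ := mul_ne_zero_iff.mp hg
    obtain ⟨hg, h18⟩ := mul_ne_zero_iff.mp hg
    obtain ⟨hg, h17⟩ := mul_ne_zero_iff.mp hg
    obtain ⟨hg, h16⟩ := mul_ne_zero_iff.mp hg
    obtain ⟨hg, h15⟩ := mul_ne_zero_iff.mp hg
    obtain ⟨hg, h14⟩ := mul_ne_zero_iff.mp hg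
    obtain ⟨hg, h13⟩ := mul_ne_zero_iff.mp hg
    obtain ⟨hg, h12⟩ := mul_ne_zero_iff.mp hg
    obtain ⟨hg, h11⟩ := mul_ne_zero_iff.mp hg
    obtain ⟨hg, h10⟩ := mul_ne_zero_iff.mp hg
    obtain ⟨hg, h9⟩ := mul_ne_zero_iff.mp hg
    obtain ⟨hg, h8⟩ := mul_ne_zero_iff.mp hg
    obtain ⟨hg, h7⟩ := mul_ne_zero_iff.mp hg
    obtain ⟨hg, h6⟩ := mul_ne_zero_iff.mp hg
    obtain ⟨hg, h5⟩ := mul_ne_zero_iff.mp hg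
    obtain ⟨hg, h4⟩ := mul_ne_zero_iff.mp hg
    obtain ⟨hg, h3⟩ := mul_ne_zero_iff.mp hg
    obtain ⟨h1, h2⟩ := mul_ne_zero_iff.mp hg
    refine ⟨⟨?_, ?_, ?_⟩, ⟨?_, ?_, ?_, ?_⟩, ?_⟩
    · simp only [projEq, F17]; ring
    · simp only [projEq, F17, Complex.I_sq]; ring_nf
    · simp only [projEq, F17, Complex.I_sq]; ring_nf
    · intro h0
      simp only [projEq] at h0
      exact h7 (by linear_combination h0)
    · intro h0
      simp only [projEq] at h0
      exact h8 (by linear_combination h0)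
    · intro h0
      simp only [projEq] at h0
      exact h9 (by linear_combination h0)
    · intro h0
      simp only [projEq] at h0
      exact h10 (by linear_combination h0)
    · intro z w hzw hmem
      rcases hmem with h | h | h | h
      · rintro (hF|hF|hF|hF)
        · exact key a b z w _ _ _ _ (by intro h0; exact h2 (by linear_combination h0)) hzw h (fun h0 => h11 (by linear_combination h0)) hF
        · exact key a b z w _ _ _ _ (by intro h0; exact h2 (by linear_combination h0)) hzw h (fun h0 => h12 (by linear_combination h0)) hF
        · exact key a b z w _ _ _ _ (by intro h0; exact h2 (by linear_combination h0)) hzw h (fun h0 => h13 (by linear_combination h0)) hF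
        · exact key a b z w _ _ _ _ (by intro h0; exact h2 (by linear_combination h0)) hzw h (fun h0 => h14 (by linear_combination h0)) hF
      · rintro (hF|hF|hF|hF)
        · exact key a b z w _ _ _ _ (by intro h0; exact one_ne_zero (by linear_combination h0)) hzw h (fun h0 => h15 (by linear_combination h0)) hF
        · exact key a b z w _ _ _ _ (by intro h0; exact one_ne_zero (by linear_combination h0)) hzw h (fun h0 => h16 (by linear_combination h0)) hF
        · exact key a b z w _ _ _ _ (by intro h0; exact one_ne_zero (by linear_combination h0)) hzw h (fun h0 => h17 (by linear_combination h0)) hF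
        · exact key a b z w _ _ _ _ (by intro h0; exact one_ne_zero (by linear_combination h0)) hzw h (fun h0 => h18 (by linear_combination h0)) hF
      · rintro (hF|hF|hF|hF)
        · exact key a b z w _ _ _ _ (by intro h0; exact h4 (by linear_combination h0)) hzw h (fun h0 => h19 (by linear_combination h0)) hF
        · exact key a b z w _ _ _ _ (by intro h0; exact h4 (by linear_combination h0)) hzw h (fun h0 => h20 (by linear_combination h0)) hF
        · exact key a b z w _ _ _ _ (by intro h0; exact h4 (by linear_combination h0)) hzw h (fun h0 => h21 (by linear_combination h0)) hF
        · exact key a b z w _ _ _ _ (by intro h0; exact h4 (by linear_combination h0)) hzw h (fun h0 => h22 (by linear_combination h0)) hF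
      · rintro (hF|hF|hF|hF)
        · exact key a b z w _ _ _ _ (by intro h0; exact h6 (by linear_combination h0)) hzw h (fun h0 => h23 (by linear_combination h0)) hF
        · exact key a b z w _ _ _ _ (by intro h0; exact h6 (by linear_combination h0)) hzw h (fun h0 => h24 (by linear_combination h0)) hF
        · exact key a b z w _ _ _ _ (by intro h0; exact h6 (by linear_combination h0)) hzw h (fun h0 => h25 (by linear_combination h0)) hF
        · exact key a b z w _ _ _ _ (by intro h0; exact h6 (by linear_combination h0)) hzw h (fun h0 => h26 (by linear_combination h0)) hF
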